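/- Let J : ℝ^N → (0,∞) be a positive measurable kernel satisfying the exponential-decay condition: there exists M_J > 0 such that for all 0 < δ < M_J there is a constant C(δ) with ∫ J(x−y) e^{−δ|y|} dy ≤ C(δ) e^{−δ|x|} for all x. Suppose f ∈ L^1(ℝ^N) satisfies c₁(1+|x|)^{−a} e^{−b|x|} ≤ f(x) ≤ c₂(1+|x|)^{−a} e^{−b|x|} for constants c₂ > c₁ > 0 and a, b ≥ 0 with a + b < M_J, and that J is integrable on the unit ball with ∫_{|y|<1} J(y) e^{−b|y|} dy > 0. Then there exist constants C₀ > c₀ > 0 such that c₀ (1+|x|)^{−a} e^{−b|x|} ≤ (J * f)(x) ≤ C₀ (1+|x|)^{−a} e^{−b|x|} for all x ∈ ℝ^N. -/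
import Mathlib


open MeasureTheory Real

private lemma phi_mono {a b δ : ℝ} (ha : 0 ≤ a) (h : a + b ≤ δ) {s t : ℝ}
    (hs : 0 ≤ s) (hst : s ≤ t) :
    (1 + s) ^ (-a) * Real.exp ((δ - b) * s) ≤ (1 + t) ^ (-a) * Real.exp ((δ - b) * t) := by
  have h1s : (0:ℝ) < 1 + s := by linarith
  have h1t : (0:ℝ) < 1 + t := by linarith
  have key : (1 + t) ^ a ≤ (1 + s) ^ a * Real.exp (a * (t - s)) := by
    have h1 : 1 + t ≤ (1 + s) * Real.exp (t - s) := by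
      have h2 := Real.add_one_le_exp (t - s)
      nlinarith [Real.exp_pos (t - s)]
    calc (1 + t) ^ a ≤ ((1 + s) * Real.exp (t - s)) ^ a :=
          Real.rpow_le_rpow h1t.le h1 ha
      _ = (1 + s) ^ a * (Real.exp (t - s)) ^ a :=
          Real.mul_rpow h1s.le (Real.exp_pos _).le
      _ = (1 + s) ^ a * Real.exp (a * (t - s)) := by
          rw [← Real.exp_mul, mul_comm (t - s) a]
  rw [Real.rpow_neg h1s.le, Real.rpow_neg h1t.le, inv_mul_eq_div, inv_mul_eq_div,
    div_le_div_iff₀ (Real.rpow_pos_of_pos h1s a) (Real.rpow_pos_of_pos h1t a)]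
  calc Real.exp ((δ - b) * s) * (1 + t) ^ a
      ≤ Real.exp ((δ - b) * s) * ((1 + s) ^ a * Real.exp (a * (t - s))) :=
        mul_le_mul_of_nonneg_left key (Real.exp_pos _).le
    _ = Real.exp ((δ - b) * s + a * (t - s)) * (1 + s) ^ a := by
        rw [Real.exp_add]; ring
    _ ≤ Real.exp ((δ - b) * t) * (1 + s) ^ a := by
        apply mul_le_mul_of_nonneg_right _ (Real.rpow_pos_of_pos h1s a).le
        apply Real.exp_le_exp.mpr
        nlinarith

set_option maxHeartbeats 1000000 in
theorem stmt_1 (N : ℕ) (hN : 1 ≤ N)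
    (J f : EuclideanSpace ℝ (Fin N) → ℝ)
    (hJmeas : Measurable J) (hJpos : ∀ y, 0 < J y)
    (hJint : Integrable J)
    (M_J : ℝ) (hM : 0 < M_J)
    (hE : ∀ δ : ℝ, 0 < δ → δ < M_J → ∃ C : ℝ, ∀ x : EuclideanSpace ℝ (Fin N),
      (∫ y, J (x - y) * Real.exp (-δ * ‖y‖)) ≤ C * Real.exp (-δ * ‖x‖))
    (a b c₁ c₂ : ℝ) (ha : 0 ≤ a) (hb : 0 ≤ b) (hab : a + b < M_J)
    (hc₁ : 0 < c₁) (hc₁₂ : c₁ < c₂)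
    (hfint : Integrable f)
    (hflb : ∀ x, c₁ * ((1 + ‖x‖) ^ (-a) * Real.exp (-b * ‖x‖)) ≤ f x)
    (hfub : ∀ x, f x ≤ c₂ * ((1 + ‖x‖) ^ (-a) * Real.exp (-b * ‖x‖)))
    (hJball : 0 < ∫ y in {y : EuclideanSpace ℝ (Fin N) | ‖y‖ < 1},
      J y * Real.exp (-b * ‖y‖)) :
    ∃ c₀ C₀ : ℝ, 0 < c₀ ∧ c₀ < C₀ ∧ ∀ x : EuclideanSpace ℝ (Fin N),
      c₀ * ((1 + ‖x‖) ^ (-a) * Real.exp (-b * ‖x‖)) ≤ (∫ z, J (x - z) * f z) ∧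
      (∫ z, J (x - z) * f z) ≤ C₀ * ((1 + ‖x‖) ^ (-a) * Real.exp (-b * ‖x‖)) := by
  classical
  -- basic facts about the weight g z = (1+‖z‖)^(-a) * exp(-b‖z‖)
  have hgpos : ∀ z : EuclideanSpace ℝ (Fin N), 0 < (1 + ‖z‖) ^ (-a) * Real.exp (-b * ‖z‖) := by
    intro z
    have : (0:ℝ) < 1 + ‖z‖ := by positivity
    positivity
  have hgle1 : ∀ z : EuclideanSpace ℝ (Fin N), (1 + ‖z‖) ^ (-a) * Real.exp (-b * ‖z‖) ≤ 1 := by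
    intro z
    have h1 : (1 + ‖z‖) ^ (-a) ≤ 1 :=
      Real.rpow_le_one_of_one_le_of_nonpos (by linarith [norm_nonneg z]) (by linarith)
    have h2 : Real.exp (-b * ‖z‖) ≤ 1 := by
      rw [Real.exp_le_one_iff]
      have := norm_nonneg z; nlinarith
    have h3 : (0:ℝ) < (1 + ‖z‖) ^ (-a) :=
      Real.rpow_pos_of_pos (by linarith [norm_nonneg z]) _
    nlinarith [Real.exp_pos (-b * ‖z‖)]
  have hfnn : ∀ z : EuclideanSpace ℝ (Fin N), 0 ≤ f z := fun z => le_trans (by positivity) (hflb z)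
  have hgcont : Continuous (fun z : EuclideanSpace ℝ (Fin N) => (1 + ‖z‖) ^ (-a) * Real.exp (-b * ‖z‖)) := by
    apply Continuous.mul
    · exact Continuous.rpow_const (continuous_const.add continuous_norm)
        (fun z => Or.inl (by positivity))
    · exact Real.continuous_exp.comp (continuous_const.mul continuous_norm)
  -- choice of δ
  set δ : ℝ := (a + b + M_J) / 2 with hδdef
  have hδ0 : 0 < δ := by simp only [hδdef]; linarith
  have hδM : δ < M_J := by simp only [hδdef]; linarith
  have hδab : a + b ≤ δ := by simp only [hδdef]; linarith
  obtain ⟨C, hC⟩ := hE δ hδ0 hδM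
  set IJ : ℝ := ∫ z, J z with hIJdef
  have hIJ0 : 0 ≤ IJ := integral_nonneg fun z => (hJpos z).le
  set I₀ : ℝ := ∫ y in {y : EuclideanSpace ℝ (Fin N) | ‖y‖ < 1}, J y * Real.exp (-b * ‖y‖) with hI₀def
  set c₀ : ℝ := c₁ * ((2:ℝ) ^ (-a) * I₀) with hc₀def
  have hc₀pos : 0 < c₀ := by
    have h2 : (0:ℝ) < (2:ℝ) ^ (-a) := Real.rpow_pos_of_pos (by norm_num) _
    simp only [hc₀def]
    exact mul_pos hc₁ (mul_pos h2 hJball)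
  set C₀ : ℝ := max (c₂ * (C + IJ)) c₀ + 1 with hC₀def
  refine ⟨c₀, C₀, hc₀pos, ?_, ?_⟩
  · have := le_max_right (c₂ * (C + IJ)) c₀; simp only [hC₀def]; linarith
  intro x
  have hgx := hgpos x
  -- integrability facts
  have hJx : Integrable (fun z : EuclideanSpace ℝ (Fin N) => J (x - z)) := hJint.comp_sub_left x
  have hJf : Integrable (fun z : EuclideanSpace ℝ (Fin N) => J (x - z) * f z) := by
    have h := Integrable.bdd_mul (f := f) (c := c₂) hJx hfint.1
      (Filter.Eventually.of_forall fun z => by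
        rw [Real.norm_eq_abs, abs_of_nonneg (hfnn z)]
        have := hgle1 z; have := hgpos z
        nlinarith [hfub z])
    simpa [mul_comm] using h
  have hJg : Integrable (fun z : EuclideanSpace ℝ (Fin N) => J (x - z) * ((1 + ‖z‖) ^ (-a) * Real.exp (-b * ‖z‖))) := by
    have h := Integrable.bdd_mul (c := 1) hJx hgcont.aestronglyMeasurable
      (Filter.Eventually.of_forall fun z => by
        rw [Real.norm_eq_abs, abs_of_nonneg (hgpos z).le]
        exact hgle1 z)
    simpa [mul_comm] using h
  have hJδ : Integrable (fun z : EuclideanSpace ℝ (Fin N) => J (x - z) * Real.exp (-δ * ‖z‖)) := by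
    have hcont : Continuous (fun z : EuclideanSpace ℝ (Fin N) => Real.exp (-δ * ‖z‖)) :=
      Real.continuous_exp.comp (continuous_const.mul continuous_norm)
    have h := Integrable.bdd_mul (c := 1) hJx hcont.aestronglyMeasurable
      (Filter.Eventually.of_forall fun z => by
        rw [Real.norm_eq_abs, abs_of_nonneg (Real.exp_pos _).le, Real.exp_le_one_iff]
        have := norm_nonneg z; nlinarith)
    simpa [mul_comm] using h
  have hJe : Integrable (fun z : EuclideanSpace ℝ (Fin N) => J (x - z) * Real.exp (-b * ‖x - z‖)) := by
    have hcont : Continuous (fun z : EuclideanSpace ℝ (Fin N) => Real.exp (-b * ‖x - z‖)) :=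
      Real.continuous_exp.comp (continuous_const.mul ((continuous_const.sub continuous_id).norm))
    have h := Integrable.bdd_mul (c := 1) hJx hcont.aestronglyMeasurable
      (Filter.Eventually.of_forall fun z => by
        rw [Real.norm_eq_abs, abs_of_nonneg (Real.exp_pos _).le, Real.exp_le_one_iff]
        have := norm_nonneg (x - z); nlinarith)
    simpa [mul_comm] using h
  have h1x : (0:ℝ) < 1 + ‖x‖ := by positivity
  constructor
  · -- lower bound
    have key : ∀ z ∈ Metric.ball x (1:ℝ),
        (c₁ * (2:ℝ) ^ (-a) * ((1 + ‖x‖) ^ (-a) * Real.exp (-b * ‖x‖))) *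
          (J (x - z) * Real.exp (-b * ‖x - z‖)) ≤ J (x - z) * f z := by
      intro z hz
      have hxz : ‖x - z‖ < 1 := by
        rw [Metric.mem_ball, dist_eq_norm] at hz
        rw [norm_sub_rev]; exact hz
      have hz1 : ‖z‖ ≤ ‖x‖ + ‖x - z‖ := by
        calc ‖z‖ = ‖x - (x - z)‖ := by congr 1; abel
          _ ≤ ‖x‖ + ‖x - z‖ := norm_sub_le _ _
      have h1 : ((2:ℝ) * (1 + ‖x‖)) ^ (-a) ≤ (1 + ‖z‖) ^ (-a) :=
        Real.rpow_le_rpow_of_nonpos (by positivity) (by linarith [norm_nonneg x]) (by linarith)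
      have h1' : (2:ℝ) ^ (-a) * (1 + ‖x‖) ^ (-a) ≤ (1 + ‖z‖) ^ (-a) := by
        rwa [Real.mul_rpow (by norm_num) (by positivity)] at h1
      have h2 : Real.exp (-b * ‖x‖) * Real.exp (-b * ‖x - z‖) ≤ Real.exp (-b * ‖z‖) := by
        rw [← Real.exp_add]; apply Real.exp_le_exp.mpr; nlinarith
      have hgz : c₁ * ((2:ℝ) ^ (-a) * ((1 + ‖x‖) ^ (-a) * Real.exp (-b * ‖x‖)) *
          Real.exp (-b * ‖x - z‖)) ≤ c₁ * ((1 + ‖z‖) ^ (-a) * Real.exp (-b * ‖z‖)) := by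
        apply mul_le_mul_of_nonneg_left _ hc₁.le
        calc (2:ℝ) ^ (-a) * ((1 + ‖x‖) ^ (-a) * Real.exp (-b * ‖x‖)) * Real.exp (-b * ‖x - z‖)
            = ((2:ℝ) ^ (-a) * (1 + ‖x‖) ^ (-a)) *
              (Real.exp (-b * ‖x‖) * Real.exp (-b * ‖x - z‖)) := by ring
          _ ≤ (1 + ‖z‖) ^ (-a) * Real.exp (-b * ‖z‖) :=
              mul_le_mul h1' h2 (by positivity) (by positivity)
      have hfz := hgz.trans (hflb z)
      calc (c₁ * (2:ℝ) ^ (-a) * ((1 + ‖x‖) ^ (-a) * Real.exp (-b * ‖x‖))) *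
            (J (x - z) * Real.exp (-b * ‖x - z‖))
          = J (x - z) * (c₁ * ((2:ℝ) ^ (-a) * ((1 + ‖x‖) ^ (-a) * Real.exp (-b * ‖x‖)) *
              Real.exp (-b * ‖x - z‖))) := by ring
        _ ≤ J (x - z) * f z := mul_le_mul_of_nonneg_left hfz (hJpos _).le
    have hIcov : (∫ z in Metric.ball x 1, J (x - z) * Real.exp (-b * ‖x - z‖)) = I₀ := by
      have hmp := Measure.measurePreserving_sub_left (volume : Measure (EuclideanSpace ℝ (Fin N))) x
      have hemb : MeasurableEmbedding (fun z : EuclideanSpace ℝ (Fin N) => x - z) :=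
        (MeasurableEquiv.subLeft x).measurableEmbedding
      have h := hmp.setIntegral_preimage_emb hemb
        (fun y => J y * Real.exp (-b * ‖y‖)) {y : EuclideanSpace ℝ (Fin N) | ‖y‖ < 1}
      have hset : (fun z : EuclideanSpace ℝ (Fin N) => x - z) ⁻¹'
          {y : EuclideanSpace ℝ (Fin N) | ‖y‖ < 1} = Metric.ball x 1 := by
        ext z
        simp [Metric.mem_ball, dist_eq_norm, norm_sub_rev]
      rw [hset] at h
      rw [h, hI₀def]
    calc c₀ * ((1 + ‖x‖) ^ (-a) * Real.exp (-b * ‖x‖))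
        = (c₁ * (2:ℝ) ^ (-a) * ((1 + ‖x‖) ^ (-a) * Real.exp (-b * ‖x‖))) * I₀ := by
          rw [hc₀def]; ring
      _ = ∫ z in Metric.ball x 1, (c₁ * (2:ℝ) ^ (-a) * ((1 + ‖x‖) ^ (-a) *
            Real.exp (-b * ‖x‖))) * (J (x - z) * Real.exp (-b * ‖x - z‖)) := by
          rw [integral_const_mul, hIcov]
      _ ≤ ∫ z in Metric.ball x 1, J (x - z) * f z :=
          setIntegral_mono_on ((hJe.const_mul _).integrableOn) hJf.integrableOn
            measurableSet_ball key
      _ ≤ ∫ z, J (x - z) * f z :=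
          setIntegral_le_integral hJf
            (Filter.Eventually.of_forall fun z => mul_nonneg (hJpos _).le (hfnn z))
  · -- upper bound
    set φx : ℝ := (1 + ‖x‖) ^ (-a) * Real.exp ((δ - b) * ‖x‖) with hφxdef
    have hφx0 : 0 ≤ φx := by rw [hφxdef]; positivity
    have hφg : φx * Real.exp (-δ * ‖x‖)
        = (1 + ‖x‖) ^ (-a) * Real.exp (-b * ‖x‖) := by
      rw [hφxdef, mul_assoc, ← Real.exp_add]
      congr 2; ring
    have hA : MeasurableSet {z : EuclideanSpace ℝ (Fin N) | ‖z‖ ≤ ‖x‖} :=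
      measurableSet_le measurable_norm measurable_const
    have step1 : (∫ z, J (x - z) * f z)
        ≤ c₂ * ∫ z, J (x - z) * ((1 + ‖z‖) ^ (-a) * Real.exp (-b * ‖z‖)) := by
      rw [← integral_const_mul]
      apply integral_mono hJf (hJg.const_mul c₂)
      intro z
      calc J (x - z) * f z
          ≤ J (x - z) * (c₂ * ((1 + ‖z‖) ^ (-a) * Real.exp (-b * ‖z‖))) :=
            mul_le_mul_of_nonneg_left (hfub z) (hJpos _).le
        _ = c₂ * (J (x - z) * ((1 + ‖z‖) ^ (-a) * Real.exp (-b * ‖z‖))) := by ring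
    have h2a : (∫ z in {z : EuclideanSpace ℝ (Fin N) | ‖z‖ ≤ ‖x‖},
        J (x - z) * ((1 + ‖z‖) ^ (-a) * Real.exp (-b * ‖z‖)))
        ≤ C * ((1 + ‖x‖) ^ (-a) * Real.exp (-b * ‖x‖)) := by
      have hp1 : ∀ z ∈ {z : EuclideanSpace ℝ (Fin N) | ‖z‖ ≤ ‖x‖},
          J (x - z) * ((1 + ‖z‖) ^ (-a) * Real.exp (-b * ‖z‖))
          ≤ φx * (J (x - z) * Real.exp (-δ * ‖z‖)) := by
        intro z hz
        have hzx : ‖z‖ ≤ ‖x‖ := hz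
        have hm := phi_mono ha hδab (norm_nonneg z) hzx
        have hgz : (1 + ‖z‖) ^ (-a) * Real.exp (-b * ‖z‖)
            = ((1 + ‖z‖) ^ (-a) * Real.exp ((δ - b) * ‖z‖)) * Real.exp (-δ * ‖z‖) := by
          rw [mul_assoc, ← Real.exp_add]; congr 2; ring
        rw [hgz]
        calc J (x - z) * (((1 + ‖z‖) ^ (-a) * Real.exp ((δ - b) * ‖z‖)) * Real.exp (-δ * ‖z‖))
            ≤ J (x - z) * (φx * Real.exp (-δ * ‖z‖)) := by
              apply mul_le_mul_of_nonneg_left _ (hJpos _).le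
              exact mul_le_mul_of_nonneg_right hm (Real.exp_pos _).le
          _ = φx * (J (x - z) * Real.exp (-δ * ‖z‖)) := by ring
      calc (∫ z in {z : EuclideanSpace ℝ (Fin N) | ‖z‖ ≤ ‖x‖},
            J (x - z) * ((1 + ‖z‖) ^ (-a) * Real.exp (-b * ‖z‖)))
          ≤ ∫ z in {z : EuclideanSpace ℝ (Fin N) | ‖z‖ ≤ ‖x‖},
              φx * (J (x - z) * Real.exp (-δ * ‖z‖)) :=
            setIntegral_mono_on hJg.integrableOn ((hJδ.const_mul φx).integrableOn) hA hp1
        _ = φx * ∫ z in {z : EuclideanSpace ℝ (Fin N) | ‖z‖ ≤ ‖x‖},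
              J (x - z) * Real.exp (-δ * ‖z‖) := integral_const_mul _ _
        _ ≤ φx * ∫ z, J (x - z) * Real.exp (-δ * ‖z‖) := by
            apply mul_le_mul_of_nonneg_left _ hφx0
            exact setIntegral_le_integral hJδ
              (Filter.Eventually.of_forall fun z => mul_nonneg (hJpos _).le (Real.exp_pos _).le)
        _ ≤ φx * (C * Real.exp (-δ * ‖x‖)) := mul_le_mul_of_nonneg_left (hC x) hφx0
        _ = C * ((1 + ‖x‖) ^ (-a) * Real.exp (-b * ‖x‖)) := by rw [← hφg]; ring
    have h2b : (∫ z in {z : EuclideanSpace ℝ (Fin N) | ‖z‖ ≤ ‖x‖}ᶜ,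
        J (x - z) * ((1 + ‖z‖) ^ (-a) * Real.exp (-b * ‖z‖)))
        ≤ IJ * ((1 + ‖x‖) ^ (-a) * Real.exp (-b * ‖x‖)) := by
      have hp2 : ∀ z ∈ {z : EuclideanSpace ℝ (Fin N) | ‖z‖ ≤ ‖x‖}ᶜ,
          J (x - z) * ((1 + ‖z‖) ^ (-a) * Real.exp (-b * ‖z‖))
          ≤ J (x - z) * ((1 + ‖x‖) ^ (-a) * Real.exp (-b * ‖x‖)) := by
        intro z hz
        simp only [Set.mem_compl_iff, Set.mem_setOf_eq, not_le] at hz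
        apply mul_le_mul_of_nonneg_left _ (hJpos _).le
        have h1 : (1 + ‖z‖) ^ (-a) ≤ (1 + ‖x‖) ^ (-a) :=
          Real.rpow_le_rpow_of_nonpos h1x (by linarith) (by linarith)
        have h2 : Real.exp (-b * ‖z‖) ≤ Real.exp (-b * ‖x‖) :=
          Real.exp_le_exp.mpr (by nlinarith)
        exact mul_le_mul h1 h2 (Real.exp_pos _).le (by positivity)
      calc (∫ z in {z : EuclideanSpace ℝ (Fin N) | ‖z‖ ≤ ‖x‖}ᶜ,
            J (x - z) * ((1 + ‖z‖) ^ (-a) * Real.exp (-b * ‖z‖)))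
          ≤ ∫ z in {z : EuclideanSpace ℝ (Fin N) | ‖z‖ ≤ ‖x‖}ᶜ,
              J (x - z) * ((1 + ‖x‖) ^ (-a) * Real.exp (-b * ‖x‖)) :=
            setIntegral_mono_on hJg.integrableOn ((hJx.mul_const _).integrableOn) hA.compl hp2
        _ = (∫ z in {z : EuclideanSpace ℝ (Fin N) | ‖z‖ ≤ ‖x‖}ᶜ, J (x - z)) *
              ((1 + ‖x‖) ^ (-a) * Real.exp (-b * ‖x‖)) := integral_mul_const _ _
        _ ≤ (∫ z, J (x - z)) * ((1 + ‖x‖) ^ (-a) * Real.exp (-b * ‖x‖)) := by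
            apply mul_le_mul_of_nonneg_right _ hgx.le
            exact setIntegral_le_integral hJx
              (Filter.Eventually.of_forall fun z => (hJpos _).le)
        _ = IJ * ((1 + ‖x‖) ^ (-a) * Real.exp (-b * ‖x‖)) := by
            rw [integral_sub_left_eq_self J volume x]
    calc (∫ z, J (x - z) * f z)
        ≤ c₂ * ∫ z, J (x - z) * ((1 + ‖z‖) ^ (-a) * Real.exp (-b * ‖z‖)) := step1
      _ = c₂ * ((∫ z in {z : EuclideanSpace ℝ (Fin N) | ‖z‖ ≤ ‖x‖},
            J (x - z) * ((1 + ‖z‖) ^ (-a) * Real.exp (-b * ‖z‖)))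
          + ∫ z in {z : EuclideanSpace ℝ (Fin N) | ‖z‖ ≤ ‖x‖}ᶜ,
            J (x - z) * ((1 + ‖z‖) ^ (-a) * Real.exp (-b * ‖z‖))) := by
          rw [integral_add_compl hA hJg]
      _ ≤ c₂ * (C * ((1 + ‖x‖) ^ (-a) * Real.exp (-b * ‖x‖))
          + IJ * ((1 + ‖x‖) ^ (-a) * Real.exp (-b * ‖x‖))) := by
          apply mul_le_mul_of_nonneg_left (add_le_add h2a h2b) (by linarith : (0:ℝ) ≤ c₂)
      _ = (c₂ * (C + IJ)) * ((1 + ‖x‖) ^ (-a) * Real.exp (-b * ‖x‖)) := by ring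
      _ ≤ C₀ * ((1 + ‖x‖) ^ (-a) * Real.exp (-b * ‖x‖)) := by
          apply mul_le_mul_of_nonneg_right _ hgx.le
          have := le_max_left (c₂ * (C + IJ)) c₀
          simp only [hC₀def]; linarith
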